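/- Let σ₁₂ > 0 and α > 3, and define γ₁ : ℝ → ℝ by γ₁(ψ) = (3/(2√2))·σ₁₂·((1+ψ)/2)²·(2 − ψ + (α/4)(1−ψ)²). Then the second derivative satisfies γ₁″(1) > 0 and γ₁″(−1) > 0, i.e. γ₁ has a double-well (strictly convex) structure at the pure-phase values ψ = ±1. -/
import Mathlib

private lemma hasDerivAt_quartic (a b c d e x : ℝ) :
    HasDerivAt (fun t : ℝ => a * t ^ 4 + b * t ^ 3 + c * t ^ 2 + d * t + e)
      (4 * a * x ^ 3 + 3 * b * x ^ 2 + 2 * c * x + d) x := by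
  have h : HasDerivAt (fun t : ℝ => a * t ^ 4 + b * t ^ 3 + c * t ^ 2 + d * t + e)
      (a * (↑(4:ℕ) * x ^ (4 - 1)) + b * (↑(3:ℕ) * x ^ (3 - 1)) + c * (↑(2:ℕ) * x ^ (2 - 1)) + d * 1) x := by
    exact ((((hasDerivAt_pow 4 x).const_mul a).add
      ((hasDerivAt_pow 3 x).const_mul b)).add
      ((hasDerivAt_pow 2 x).const_mul c)).add ((hasDerivAt_id x).const_mul d) |>.add_const e
  convert h using 1
  ring

private lemma hasDerivAt_cubic (a b c d x : ℝ) :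
    HasDerivAt (fun t : ℝ => a * t ^ 3 + b * t ^ 2 + c * t + d)
      (3 * a * x ^ 2 + 2 * b * x + c) x := by
  have h : HasDerivAt (fun t : ℝ => a * t ^ 3 + b * t ^ 2 + c * t + d)
      (a * (↑(3:ℕ) * x ^ (3 - 1)) + b * (↑(2:ℕ) * x ^ (2 - 1)) + c * 1) x := by
    exact (((hasDerivAt_pow 3 x).const_mul a).add
      ((hasDerivAt_pow 2 x).const_mul b)).add ((hasDerivAt_id x).const_mul c) |>.add_const d
  convert h using 1
  ring

/-- For `σ₁₂ > 0` and `α > 3`, the dynamically consistent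
interpolation `γ₁(ψ) = (3/(2√2))·σ₁₂·((1+ψ)/2)²·(2 − ψ + (α/4)(1−ψ)²)` has
strictly positive second derivative at the pure-phase values `ψ = ±1`
(double-well structure). -/
theorem gamma1_double_well (σ₁₂ α : ℝ) (hσ : 0 < σ₁₂) (hα : 3 < α)
    (γ₁ : ℝ → ℝ)
    (hγ₁ : ∀ ψ : ℝ, γ₁ ψ =
      3 / (2 * Real.sqrt 2) * σ₁₂ * ((1 + ψ) / 2) ^ 2 *
        (2 - ψ + α / 4 * (1 - ψ) ^ 2)) :
    0 < deriv (deriv γ₁) 1 ∧ 0 < deriv (deriv γ₁) (-1) := by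
  set c : ℝ := 3 / (2 * Real.sqrt 2) * σ₁₂ with hc
  have hcpos : 0 < c := by
    apply mul_pos _ hσ
    positivity
  -- expanded form of γ₁
  have hf : γ₁ = fun ψ : ℝ =>
      (c * (α / 16)) * ψ ^ 4 + (c * (-1 / 4)) * ψ ^ 3 + (c * (-α / 8)) * ψ ^ 2 +
        (c * (3 / 4)) * ψ + (c * (1 / 2 + α / 16)) := by
    funext ψ
    rw [hγ₁]
    ring
  have hd : deriv γ₁ = fun ψ : ℝ =>
      (4 * (c * (α / 16))) * ψ ^ 3 + (3 * (c * (-1 / 4))) * ψ ^ 2 +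
        (2 * (c * (-α / 8))) * ψ + (c * (3 / 4)) := by
    funext x
    rw [hf]
    exact (hasDerivAt_quartic _ _ _ _ _ x).deriv
  have hdd : ∀ x : ℝ, deriv (deriv γ₁) x =
      3 * (4 * (c * (α / 16))) * x ^ 2 + 2 * (3 * (c * (-1 / 4))) * x +
        2 * (c * (-α / 8)) := by
    intro x
    rw [hd]
    exact (hasDerivAt_cubic _ _ _ _ x).deriv
  constructor
  · rw [hdd]
    have : 3 * (4 * (c * (α / 16))) * (1:ℝ) ^ 2 + 2 * (3 * (c * (-1 / 4))) * 1 +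
        2 * (c * (-α / 8)) = c * ((α - 3) / 2) := by ring
    rw [this]
    have : 0 < (α - 3) / 2 := by linarith
    positivity
  · rw [hdd]
    have : 3 * (4 * (c * (α / 16))) * (-1:ℝ) ^ 2 + 2 * (3 * (c * (-1 / 4))) * (-1) +
        2 * (c * (-α / 8)) = c * ((α + 3) / 2) := by ring
    rw [this]
    have : 0 < (α + 3) / 2 := by linarith
    positivity
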